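/- Consider majority dynamics on any graph G and a vertex v whose k-neighborhood induces a tree in which all vertices at distance less than k from v have degree d. Couple with the propagation process on this tree where leaves (distance-k vertices) get the initial colors, and an internal vertex becomes blue iff at least ⌊(d-1)/2⌋ of its children are blue. If v is red at the end of the propagation process, then v is red in generation g_k of the majority dynamics, regardless of initial colors outside N_k(v). -/

import Mathlib

open Finset

/-- One synchronous step of majority dynamics: a vertex adopts the strictly most
frequent color among its neighbors, keeping its current color in case of a tie.
Colors are `Bool`, with `true` = blue and `false` = red. -/
def majStep {V : Type*} [Fintype V] [DecidableEq V] (G : SimpleGraph V)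
    [DecidableRel G.Adj] (g : V → Bool) : V → Bool := fun v =>
  let b := ((G.neighborFinset v).filter (fun w => g w = true)).card
  let r := ((G.neighborFinset v).filter (fun w => g w = false)).card
  if r < b then true else if b < r then false else g v

/-- The ball of radius `r` around `v`: vertices joined to `v` by a walk of length
at most `r`. -/
def gball {V : Type*} (G : SimpleGraph V) (v : V) (r : ℕ) : Set V :=
  {u | ∃ p : G.Walk v u, p.length ≤ r}

section Helpers

set_option linter.unusedSectionVars false

variable {V : Type*} [Fintype V] [DecidableEq V] {G : SimpleGraph V} [DecidableRel G.Adj]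
  {v : V} {k : ℕ}

lemma gball_support {u : V} (p : G.Walk v u) (hp : p.length ≤ k) :
    ∀ x ∈ p.support, x ∈ gball G v k := fun x hx =>
  ⟨p.takeUntil x hx, le_trans (p.length_takeUntil_le hx) hp⟩

lemma reachable_of_mem_gball {u : V} (hu : u ∈ gball G v k) : G.Reachable v u := by
  obtain ⟨p, -⟩ := hu; exact ⟨p⟩

lemma dist_le_of_mem_gball {u : V} (hu : u ∈ gball G v k) : G.dist v u ≤ k := by
  obtain ⟨p, hp⟩ := hu; exact le_trans (SimpleGraph.dist_le p) hp

lemma dist_le_length_of_mem_support {b x : V} (p : G.Walk v b) (hx : x ∈ p.support) :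
    G.dist v x ≤ p.length :=
  le_trans (SimpleGraph.dist_le (p.takeUntil x hx)) (p.length_takeUntil_le hx)

lemma eq_end_of_mem_support_of_dist {b x : V} (p : G.Walk v b) (hx : x ∈ p.support)
    (h : p.length ≤ G.dist v x) : x = b := by
  have hspec := p.take_spec hx
  have hlen := congrArg SimpleGraph.Walk.length hspec
  rw [SimpleGraph.Walk.length_append] at hlen
  have h1 : G.dist v x ≤ (p.takeUntil x hx).length := SimpleGraph.dist_le _
  have h0 : (p.dropUntil x hx).length = 0 := by omega
  exact (SimpleGraph.Walk.eq_of_length_eq_zero h0)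

lemma lift_walk {a b : V} (p : G.Walk a b) (hs : ∀ x ∈ p.support, x ∈ gball G v k)
    (ha : a ∈ gball G v k) (hb : b ∈ gball G v k) :
    ∃ q : (G.induce (gball G v k)).Walk ⟨a, ha⟩ ⟨b, hb⟩,
      q.map (SimpleGraph.Embedding.induce (gball G v k)).toHom = p := by
  induction p with
  | nil => exact ⟨.nil, rfl⟩
  | @cons a x b h p ih =>
    have hx : x ∈ gball G v k := hs x (by simp)
    obtain ⟨q, hq⟩ := ih (fun y hy => hs y (by simp [hy])) hx hb
    refine ⟨.cons ?_ q, ?_⟩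
    · exact h
    · subst hq; rfl

lemma path_unique_in_ball (hac : (G.induce (gball G v k)).IsAcyclic)
    {b : V} (hv : v ∈ gball G v k) (hb : b ∈ gball G v k)
    (p q : G.Walk v b) (hp : p.IsPath) (hq : q.IsPath)
    (hps : ∀ x ∈ p.support, x ∈ gball G v k)
    (hqs : ∀ x ∈ q.support, x ∈ gball G v k) : p = q := by
  obtain ⟨p', hp'⟩ := lift_walk p hps hv hb
  obtain ⟨q', hq'⟩ := lift_walk q hqs hv hb
  have hp'path : p'.IsPath := SimpleGraph.Walk.IsPath.of_map (f := _) (hp' ▸ hp)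
  have hq'path : q'.IsPath := SimpleGraph.Walk.IsPath.of_map (f := _) (hq' ▸ hq)
  have := SimpleGraph.isAcyclic_iff_path_unique.mp hac ⟨p', hp'path⟩ ⟨q', hq'path⟩
  have heq : p' = q' := congrArg Subtype.val this
  rw [← hp', ← hq', heq]

lemma not_dist_eq_of_adj (hac : (G.induce (gball G v k)).IsAcyclic)
    {u w : V} (hu : u ∈ gball G v k) (hw : w ∈ gball G v k) (hadj : G.Adj u w)
    (heq : G.dist v u = G.dist v w) : False := by
  have hv : v ∈ gball G v k := ⟨.nil, by simp⟩
  obtain ⟨p, hp, hpl⟩ := (reachable_of_mem_gball hu).exists_path_of_dist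
  obtain ⟨q, hq, hql⟩ := (reachable_of_mem_gball hw).exists_path_of_dist
  have hwp : w ∉ p.support := by
    intro hws
    exact hadj.ne' (eq_end_of_mem_support_of_dist p hws (by omega))
  have hpc : (p.concat hadj).IsPath := by
    rw [SimpleGraph.Walk.isPath_def, SimpleGraph.Walk.support_concat]
    simp [List.nodup_append, hp.support_nodup, hwp]
    exact fun a ha h => hwp (h ▸ ha)
  have hpcs : ∀ x ∈ (p.concat hadj).support, x ∈ gball G v k := by
    intro x hx
    rw [SimpleGraph.Walk.support_concat, List.mem_append] at hx
    rcases hx with hx | hx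
    · exact gball_support p (by rw [hpl]; exact dist_le_of_mem_gball hu) x hx
    · simp at hx; exact hx ▸ hw
  have hqs : ∀ x ∈ q.support, x ∈ gball G v k :=
    gball_support q (by rw [hql]; exact dist_le_of_mem_gball hw)
  have := path_unique_in_ball hac hv hw (p.concat hadj) q hpc hq hpcs hqs
  have := congrArg SimpleGraph.Walk.length this
  rw [SimpleGraph.Walk.length_concat] at this
  omega

lemma parent_unique (hac : (G.induce (gball G v k)).IsAcyclic)
    {u w₁ w₂ : V} {j : ℕ} (hu : u ∈ gball G v k) (hju : G.dist v u = j)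
    (hw₁ : w₁ ∈ gball G v k) (hw₂ : w₂ ∈ gball G v k)
    (h1 : G.Adj u w₁) (h2 : G.Adj u w₂)
    (d1 : G.dist v w₁ + 1 = j) (d2 : G.dist v w₂ + 1 = j) : w₁ = w₂ := by
  have hv : v ∈ gball G v k := ⟨.nil, by simp⟩
  obtain ⟨p₁, hp₁, hl₁⟩ := (reachable_of_mem_gball hw₁).exists_path_of_dist
  obtain ⟨p₂, hp₂, hl₂⟩ := (reachable_of_mem_gball hw₂).exists_path_of_dist
  have hup : ∀ (b : V) (p : G.Walk v b), p.length + 1 = j → u ∉ p.support := by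
    intro b p hl hus
    have := dist_le_length_of_mem_support p hus
    omega
  have hP₁ : (p₁.concat h1.symm).IsPath := by
    rw [SimpleGraph.Walk.isPath_def, SimpleGraph.Walk.support_concat]
    simp [List.nodup_append, hp₁.support_nodup, hup w₁ p₁ (by omega)]
    exact fun a ha h => hup w₁ p₁ (by omega) (h ▸ ha)
  have hP₂ : (p₂.concat h2.symm).IsPath := by
    rw [SimpleGraph.Walk.isPath_def, SimpleGraph.Walk.support_concat]
    simp [List.nodup_append, hp₂.support_nodup, hup w₂ p₂ (by omega)]
    exact fun a ha h => hup w₂ p₂ (by omega) (h ▸ ha)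
  have hs : ∀ (b : V) (hb : b ∈ gball G v k) (h : G.Adj b u) (p : G.Walk v b),
      p.length = G.dist v b → ∀ x ∈ (p.concat h).support, x ∈ gball G v k := by
    intro b hb h p hl x hx
    rw [SimpleGraph.Walk.support_concat, List.mem_append] at hx
    rcases hx with hx | hx
    · exact gball_support p (by rw [hl]; exact dist_le_of_mem_gball hb) x hx
    · simp at hx; exact hx ▸ hu
  have heq := path_unique_in_ball hac hv hu (p₁.concat h1.symm) (p₂.concat h2.symm)
    hP₁ hP₂ (hs w₁ hw₁ h1.symm p₁ hl₁) (hs w₂ hw₂ h2.symm p₂ hl₂)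
  have hmem : w₁ ∈ (p₂.concat h2.symm).support := by
    rw [← heq, SimpleGraph.Walk.support_concat, List.mem_append]
    exact Or.inl p₁.end_mem_support
  rw [SimpleGraph.Walk.support_concat, List.mem_append] at hmem
  rcases hmem with hmem | hmem
  · exact eq_end_of_mem_support_of_dist p₂ hmem (by omega)
  · simp at hmem; exact absurd hmem h1.ne'

end Helpers

/-- Coupling of majority dynamics with the bottom-up propagation process on a
tree-like `k`-neighborhood. Suppose the `k`-neighborhood of `v` induces a tree in
which every vertex at distance less than `k` from `v` has degree `d`. Let `pr` be
the propagation coloring: on the leaves (vertices at distance `k`) it agrees with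
the initial generation, and an internal vertex is blue iff at least `⌊(d-1)/2⌋` of
its children are blue. If `v` is red in the propagation process, then `v` is red
in generation `g_k` of the majority dynamics, irrespective of the initial colors
outside the `k`-neighborhood. -/
theorem propagation_dominates_majority {V : Type*} [Fintype V] [DecidableEq V]
    (G : SimpleGraph V) [DecidableRel G.Adj] (v : V) (k d : ℕ)
    (htree : (G.induce (gball G v k)).IsTree)
    (hdeg : ∀ u : V, (∃ p : G.Walk v u, p.length < k) → G.degree u = d)
    (g : ℕ → V → Bool) (hdyn : ∀ t, g (t + 1) = majStep G (g t))
    (pr : V → Bool)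
    (hleaf : ∀ u ∈ gball G v k, G.dist v u = k → pr u = g 0 u)
    (hinternal : ∀ u ∈ gball G v k, G.dist v u < k →
      (pr u = true ↔ (d - 1) / 2 ≤
        ((G.neighborFinset u).filter
          (fun w => G.dist v w = G.dist v u + 1 ∧ pr w = true)).card))
    (hred : pr v = false) :
    g k v = false := by
  have hv : v ∈ gball G v k := ⟨.nil, by simp⟩
  have hac := htree.2
  have key : ∀ t, t ≤ k → ∀ u, u ∈ gball G v k → G.dist v u = k - t →
      pr u = false → g t u = false := by
    intro t
    induction t with
    | zero =>
      intro _ u hu hdist hpr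
      rw [← hleaf u hu (by simpa using hdist)]
      exact hpr
    | succ t ih =>
      intro ht u hu hdist hpr
      have hjk : k - (t+1) < k := by omega
      have hreach := reachable_of_mem_gball hu
      obtain ⟨p0, hp0l⟩ := hreach.exists_walk_length_eq_dist
      have hnb : ∀ w ∈ G.neighborFinset u, w ∈ gball G v k := by
        intro w hw
        rw [SimpleGraph.mem_neighborFinset] at hw
        exact ⟨p0.concat hw, by rw [SimpleGraph.Walk.length_concat]; omega⟩
      have hdistw : ∀ w ∈ G.neighborFinset u,
          G.dist v w = (k - (t+1)) + 1 ∨ G.dist v w + 1 = k - (t+1) := by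
        intro w hw
        have hwball := hnb w hw
        rw [SimpleGraph.mem_neighborFinset] at hw
        have h1 : G.dist v w ≤ (k - (t+1)) + 1 := by
          refine le_trans (SimpleGraph.dist_le (p0.concat hw)) ?_
          rw [SimpleGraph.Walk.length_concat]; omega
        obtain ⟨q0, hq0⟩ := (reachable_of_mem_gball hwball).exists_walk_length_eq_dist
        have h2 : G.dist v u ≤ G.dist v w + 1 := by
          refine le_trans (SimpleGraph.dist_le (q0.concat hw.symm)) ?_
          rw [SimpleGraph.Walk.length_concat]; omega
        have h3 : G.dist v w ≠ k - (t+1) := by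
          intro h
          exact not_dist_eq_of_adj hac hu hwball hw (by omega)
        omega
      have hdeg' : (G.neighborFinset u).card = d := by
        rw [SimpleGraph.card_neighborFinset_eq_degree]
        exact hdeg u ⟨p0, by omega⟩
      have hbc : ((G.neighborFinset u).filter
          (fun w => G.dist v w = G.dist v u + 1 ∧ pr w = true)).card < (d - 1) / 2 := by
        by_contra h
        have := (hinternal u hu (by omega)).mpr (le_of_not_gt h)
        rw [hred] at *
        simp [hpr] at this
      set C := (G.neighborFinset u).filter
          (fun w => G.dist v w = G.dist v u + 1 ∧ pr w = true) with hC
      set P := (G.neighborFinset u).filter (fun w => G.dist v w + 1 = k - (t+1)) with hP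
      have hPcard : P.card ≤ 1 := by
        rw [Finset.card_le_one]
        intro a ha b hb
        rw [hP, Finset.mem_filter, SimpleGraph.mem_neighborFinset] at ha hb
        exact parent_unique hac hu hdist (hnb a (by rw [SimpleGraph.mem_neighborFinset]; exact ha.1))
          (hnb b (by rw [SimpleGraph.mem_neighborFinset]; exact hb.1)) ha.1 hb.1 ha.2 hb.2
      have hsub : (G.neighborFinset u).filter (fun w => g t w = true) ⊆ C ∪ P := by
        intro w hw
        rw [Finset.mem_filter] at hw
        obtain ⟨hwnb, hgt⟩ := hw
        rcases hdistw w hwnb with hcase | hcase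
        · rw [Finset.mem_union]
          left
          rw [hC, Finset.mem_filter]
          refine ⟨hwnb, by omega, ?_⟩
          by_contra hprw
          rw [Bool.not_eq_true] at hprw
          have := ih (by omega) w (hnb w hwnb) (by omega) hprw
          rw [this] at hgt
          exact Bool.false_ne_true hgt
        · rw [Finset.mem_union]
          right
          rw [hP, Finset.mem_filter]
          exact ⟨hwnb, hcase⟩
      have hble : ((G.neighborFinset u).filter (fun w => g t w = true)).card ≤
          C.card + P.card :=
        le_trans (Finset.card_le_card hsub) (Finset.card_union_le C P)
      have hsplit : ((G.neighborFinset u).filter (fun w => g t w = true)).card +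
          ((G.neighborFinset u).filter (fun w => g t w = false)).card = d := by
        have hfe : ((G.neighborFinset u).filter (fun w => g t w = false)) =
            ((G.neighborFinset u).filter (fun w => ¬ g t w = true)) := by
          ext x
          simp
        rw [← hdeg', hfe]
        exact Finset.card_filter_add_card_filter_not _
      have hdivle : 2 * ((d - 1) / 2) ≤ d - 1 := by omega
      have hblt : ((G.neighborFinset u).filter (fun w => g t w = true)).card <
          ((G.neighborFinset u).filter (fun w => g t w = false)).card := by omega
      rw [hdyn t]
      show (if _ then true else if _ then false else g t u) = false
      rw [if_neg (by omega), if_pos hblt]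
  have hd0 : G.dist v v = 0 := by simp
  exact key k le_rfl v hv (by omega) hred
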